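/- Let K be an n×n positive semi-definite matrix, σ² > 0, y, b ∈ ℝⁿ. Define the primal objective L(α) = (1/2)‖b − Kα‖² + (σ²/2) αᵀ K α and the dual objective L*(α) = (1/2) αᵀ(K + σ²I)α − αᵀ b. Then min_α L(α) = −σ² · min_α L*(α), and α* = (K + σ²I)⁻¹ b minimises both L and L*. -/

import Mathlib

open Matrix

/-- Strong duality between the primal objective `L` and the dual objective `L*`:
`min L = −σ² min L*`, and `α* = (K + σ²I)⁻¹ b` minimises both. -/
theorem stmt2 (n : ℕ) (K : Matrix (Fin n) (Fin n) ℝ) (hK : K.PosSemidef)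
    (σ2 : ℝ) (hσ : 0 < σ2) (b : Fin n → ℝ)
    (L Lstar : (Fin n → ℝ) → ℝ)
    (hL : ∀ α, L α = (1/2) * ((b - K.mulVec α) ⬝ᵥ (b - K.mulVec α))
        + (σ2/2) * (α ⬝ᵥ K.mulVec α))
    (hLstar : ∀ α, Lstar α = (1/2) * (α ⬝ᵥ (K + σ2 • 1).mulVec α) - α ⬝ᵥ b)
    (αstar : Fin n → ℝ) (hα : αstar = (K + σ2 • 1)⁻¹.mulVec b) :
    (∀ α, L αstar ≤ L α) ∧ (∀ α, Lstar αstar ≤ Lstar α) ∧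
    L αstar = -σ2 * Lstar αstar := by
  set M : Matrix (Fin n) (Fin n) ℝ := K + σ2 • 1 with hMdef
  have hI : (σ2 • (1 : Matrix (Fin n) (Fin n) ℝ)).PosDef := by
    refine Matrix.PosDef.of_dotProduct_mulVec_pos (by simp [Matrix.IsHermitian]) fun x hx => ?_
    have : (σ2 • (1 : Matrix (Fin n) (Fin n) ℝ)).mulVec x = σ2 • x := by
      simp [Matrix.smul_mulVec]
    rw [this]
    have hxx : (0:ℝ) < x ⬝ᵥ x := by
      rcases Function.ne_iff.mp hx with ⟨i, hi⟩
      have h1 : (0:ℝ) < x i * x i := mul_self_pos.mpr hi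
      have h2 : ∀ j, (0:ℝ) ≤ x j * x j := fun j => mul_self_nonneg _
      exact Finset.sum_pos' (fun j _ => h2 j) ⟨i, Finset.mem_univ i, h1⟩
    simp only [star, dotProduct_smul, smul_eq_mul]
    exact mul_pos hσ hxx
  have hM : M.PosDef := Matrix.PosDef.posSemidef_add hK hI
  have hdet : IsUnit M.det := hM.det_pos.ne'.isUnit
  have hMb : M.mulVec αstar = b := by
    rw [hα, Matrix.mulVec_mulVec, Matrix.mul_nonsing_inv _ hdet, Matrix.one_mulVec]
  -- symmetry facts
  have hMsymm : Mᵀ = M := hM.isHermitian.eq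
  have hKsymm : Kᵀ = K := hK.isHermitian.eq
  have symmM : ∀ x y : Fin n → ℝ, x ⬝ᵥ M.mulVec y = y ⬝ᵥ M.mulVec x := by
    intro x y
    rw [Matrix.dotProduct_mulVec]
    conv_lhs => rw [← hMsymm]
    rw [Matrix.vecMul_transpose, dotProduct_comm]
  have symmK : ∀ x y : Fin n → ℝ, x ⬝ᵥ K.mulVec y = y ⬝ᵥ K.mulVec x := by
    intro x y
    rw [Matrix.dotProduct_mulVec]
    conv_lhs => rw [← hKsymm]
    rw [Matrix.vecMul_transpose, dotProduct_comm]
  have hKnn : ∀ x : Fin n → ℝ, 0 ≤ x ⬝ᵥ K.mulVec x := by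
    intro x
    have := hK.dotProduct_mulVec_nonneg x
    simpa using this
  have hMb' : ∀ x, b - K.mulVec x = σ2 • (αstar) + K.mulVec (αstar - x) := by
    intro x
    rw [← hMb, hMdef]
    simp [Matrix.add_mulVec, Matrix.smul_mulVec, Matrix.mulVec_sub]
    abel
  have key : L αstar = σ2/2 * (αstar ⬝ᵥ b) := by
    rw [hL]
    have h1 : b - K.mulVec αstar = σ2 • αstar := by
      rw [hMb' αstar]; simp
    rw [h1, ← hMb, hMdef]
    simp only [smul_dotProduct, dotProduct_smul, smul_eq_mul, Matrix.add_mulVec,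
      Matrix.smul_mulVec, Matrix.one_mulVec, dotProduct_add]
    ring
  refine ⟨?_, ?_, ?_⟩
  · intro α
    rw [hL α, key]
    have hd : b - K.mulVec α = σ2 • αstar + K.mulVec (αstar - α) := hMb' α
    set δ := αstar - α with hδ
    have hα' : α = αstar - δ := by rw [hδ]; abel
    rw [hd, hα']
    have e1 : (αstar - δ) ⬝ᵥ K.mulVec (αstar - δ)
        = αstar ⬝ᵥ K.mulVec αstar - 2 * (αstar ⬝ᵥ K.mulVec δ) + δ ⬝ᵥ K.mulVec δ := by
      rw [Matrix.mulVec_sub]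
      simp only [sub_dotProduct, dotProduct_sub]
      rw [symmK δ αstar]; ring
    have e2 : (σ2 • αstar + K.mulVec δ) ⬝ᵥ (σ2 • αstar + K.mulVec δ)
        = σ2 * σ2 * (αstar ⬝ᵥ αstar) + 2 * σ2 * (αstar ⬝ᵥ K.mulVec δ)
          + K.mulVec δ ⬝ᵥ K.mulVec δ := by
      simp only [add_dotProduct, dotProduct_add, smul_dotProduct, dotProduct_smul, smul_eq_mul]
      rw [dotProduct_comm (K.mulVec δ) αstar]; ring
    rw [e1, e2]
    have hb : αstar ⬝ᵥ b = αstar ⬝ᵥ M.mulVec αstar := by rw [hMb]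
    have hbM : αstar ⬝ᵥ M.mulVec αstar
        = αstar ⬝ᵥ K.mulVec αstar + σ2 * (αstar ⬝ᵥ αstar) := by
      rw [hMdef]
      simp [Matrix.add_mulVec, Matrix.smul_mulVec, dotProduct_add]
    rw [hb, hbM]
    have h1 : 0 ≤ K.mulVec δ ⬝ᵥ K.mulVec δ := Finset.sum_nonneg fun i _ => mul_self_nonneg _
    have h2 : 0 ≤ δ ⬝ᵥ K.mulVec δ := hKnn δ
    nlinarith
  · intro α
    rw [hLstar α, hLstar αstar]
    set δ := α - αstar with hδ
    have hα' : α = αstar + δ := by rw [hδ]; abel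
    have hnn : 0 ≤ δ ⬝ᵥ M.mulVec δ := by
      have := hM.posSemidef.dotProduct_mulVec_nonneg δ
      simpa using this
    rw [hα']
    have e1 : (αstar + δ) ⬝ᵥ M.mulVec (αstar + δ)
        = αstar ⬝ᵥ M.mulVec αstar + 2 * (δ ⬝ᵥ M.mulVec αstar) + δ ⬝ᵥ M.mulVec δ := by
      rw [Matrix.mulVec_add]
      simp only [add_dotProduct, dotProduct_add]
      rw [symmM αstar δ]; ring
    have e2 : (αstar + δ) ⬝ᵥ b = αstar ⬝ᵥ b + δ ⬝ᵥ M.mulVec αstar := by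
      rw [hMb]; simp [add_dotProduct]
    rw [e1, e2]
    linarith
  · rw [key, hLstar αstar, hMb]
    ring
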